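/- Let G be a connected block graph of order n with exactly p pendant vertices. Then SW_{n−1}(G) = n² − n − p. -/

import Mathlib

open SimpleGraph Finset
open scoped Classical

/-- The Steiner distance of a vertex set `S` in `G`: the minimum number of edges of a
connected subgraph of `G` whose vertex set contains `S`. -/
noncomputable def steinerDist {V : Type*} (G : SimpleGraph V) (S : Set V) : ℕ :=
  sInf {m | ∃ H : G.Subgraph, H.Connected ∧ S ⊆ H.verts ∧ H.edgeSet.ncard = m}

/-- The Steiner `k`-Wiener index: the sum of Steiner distances over all `k`-element
vertex subsets. -/
noncomputable def steinerWiener {V : Type*} [Fintype V] (G : SimpleGraph V) (k : ℕ) : ℕ :=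
  ∑ S ∈ Finset.powersetCard k (Finset.univ : Finset V), steinerDist G (↑S : Set V)

/-- `v` is a cut vertex of `G`: `G` is connected but deleting `v` disconnects it. -/
def IsCutVertex {V : Type*} (G : SimpleGraph V) (v : V) : Prop :=
  G.Connected ∧ ¬ (G.induce {u | u ≠ v}).Connected

/-- The induced subgraph on `B` is connected and has no cut vertex. -/
def IsBiconnectedSet {V : Type*} (G : SimpleGraph V) (B : Set V) : Prop :=
  (G.induce B).Connected ∧
    ∀ v ∈ B, (B \ {v}).Nonempty → (G.induce (B \ {v})).Connected

/-- `B` is a block of `G`: a maximal set inducing a connected subgraph without cut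
vertex (with at least two vertices). -/
def IsBlock {V : Type*} (G : SimpleGraph V) (B : Set V) : Prop :=
  2 ≤ B.ncard ∧ IsBiconnectedSet G B ∧
    ∀ B' : Set V, B ⊆ B' → 2 ≤ B'.ncard → IsBiconnectedSet G B' → B' = B

/-- A block graph: a connected graph in which every block is a clique. -/
def IsBlockGraph {V : Type*} (G : SimpleGraph V) : Prop :=
  G.Connected ∧ ∀ B : Set V, IsBlock G B → G.IsClique B

/-! ### Auxiliary development -/

section Aux

variable {V : Type*} {G : SimpleGraph V}

/-- Reachability within a vertex set: a walk whose support stays inside `S`. -/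
private def RW (G : SimpleGraph V) (S : Set V) (x y : V) : Prop :=
  ∃ p : G.Walk x y, ∀ z ∈ p.support, z ∈ S

private lemma rw_refl {S : Set V} {x : V} (hx : x ∈ S) : RW G S x x := ⟨Walk.nil, by simp [hx]⟩

private lemma rw_mono {S T : Set V} {x y : V} (hST : S ⊆ T) (h : RW G S x y) : RW G T x y := by
  obtain ⟨p, hp⟩ := h; exact ⟨p, fun z hz => hST (hp z hz)⟩

private lemma rw_end_mem {S : Set V} {x y : V} (h : RW G S x y) : y ∈ S := by
  obtain ⟨p, hp⟩ := h; exact hp _ p.end_mem_support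

private lemma rw_symm {S : Set V} {x y : V} (h : RW G S x y) : RW G S y x := by
  obtain ⟨p, hp⟩ := h
  exact ⟨p.reverse, fun z hz => hp z (by rwa [Walk.support_reverse, List.mem_reverse] at hz)⟩

private lemma rw_trans {S : Set V} {x y z : V} (h1 : RW G S x y) (h2 : RW G S y z) :
    RW G S x z := by
  obtain ⟨p, hp⟩ := h1; obtain ⟨q, hq⟩ := h2
  refine ⟨p.append q, fun w hw => ?_⟩
  rw [Walk.support_append, List.mem_append] at hw
  rcases hw with hw | hw
  · exact hp _ hw
  · exact hq _ (List.mem_of_mem_tail hw)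

private lemma rw_adj {S : Set V} {x y : V} (h : G.Adj x y) (hx : x ∈ S) (hy : y ∈ S) :
    RW G S x y :=
  ⟨h.toWalk, by simp [hx, hy]⟩

private lemma conn_of_rw_hub {S : Set V} {c : V} (hc : c ∈ S) (h : ∀ x ∈ S, RW G S x c) :
    (G.induce S).Connected := by
  apply G.induce_connected_of_patches c hc
  intro v hv
  obtain ⟨p, hp⟩ := rw_symm (h v hv)
  exact ⟨{z | z ∈ p.support}, fun z hz => hp z hz, p.start_mem_support, p.end_mem_support,
    p.connected_induce_support.preconnected _ _⟩

private lemma rw_of_induce_connected {S : Set V} (h : (G.induce S).Connected) {x y : V}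
    (hx : x ∈ S) (hy : y ∈ S) : RW G S x y := by
  rw [connected_induce_iff, Subgraph.connected_iff_forall_exists_walk_subgraph] at h
  obtain ⟨p, hp⟩ := h.2 (by simpa using hx) (by simpa using hy)
  refine ⟨p, fun z hz => ?_⟩
  have := hp.1 (by rw [Walk.mem_verts_toSubgraph]; exact hz)
  simpa using this

/-- A walk from inside `A` to outside `A` crosses the boundary. -/
private lemma crossing {x y : V} (p : G.Walk x y) (A : Set V) (hx : x ∈ A) (hy : y ∉ A) :
    ∃ a b, G.Adj a b ∧ a ∈ A ∧ b ∉ A ∧ b ∈ p.support := by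
  induction p with
  | nil => exact absurd hx hy
  | @cons u c w h q ih =>
    by_cases hc : c ∈ A
    · obtain ⟨a, b, hab, ha, hb, hbs⟩ := ih hc hy
      exact ⟨a, b, hab, ha, hb, by simp [hbs]⟩
    · exact ⟨u, c, h, hx, hc, by simp⟩

/-- Key splitting lemma: after removing one vertex from a path, every remaining support
vertex can still reach one of the two endpoints within the remaining support. -/
private lemma path_split {u1 u2 : V} (p : G.Walk u1 u2) (hp : p.IsPath) (w x : V)
    (hx : x ∈ p.support) (hxw : x ≠ w) :
    RW G ({z | z ∈ p.support} \ {w}) x u1 ∨ RW G ({z | z ∈ p.support} \ {w}) x u2 := by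
  induction p with
  | nil =>
    rw [Walk.support_nil, List.mem_singleton] at hx
    subst hx
    exact Or.inl (rw_refl ⟨by simp, hxw⟩)
  | @cons u b w2 h q ih =>
    rw [Walk.cons_isPath_iff] at hp
    have hsub : {z | z ∈ q.support} \ {w} ⊆ {z | z ∈ (Walk.cons h q).support} \ {w} := by
      intro z hz; exact ⟨by simp [hz.1.out], hz.2⟩
    rw [Walk.support_cons, List.mem_cons] at hx
    rcases hx with rfl | hxq
    · exact Or.inl (rw_refl ⟨by simp, hxw⟩)
    · by_cases huw : u = w
      · subst huw
        refine Or.inr ⟨q.dropUntil x hxq, fun z hz => ?_⟩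
        have hzq : z ∈ q.support := q.support_dropUntil_subset hxq hz
        exact ⟨by simp [hzq], fun hzu => hp.2 (hzu.out ▸ hzq)⟩
      · rcases ih hp.1 hxq with h1 | h1
        · obtain ⟨r, hr⟩ := h1
          have hb : b ∈ {z | z ∈ q.support} \ {w} := hr _ r.end_mem_support
          exact Or.inl (rw_trans (rw_mono hsub ⟨r, hr⟩)
            (rw_adj h.symm (hsub hb) ⟨by simp, huw⟩))
        · exact Or.inr (rw_mono hsub h1)

end Aux

section AuxFin

variable {V : Type*} [Fintype V] {G : SimpleGraph V}

/-- Spanning tree: a connected subgraph with prescribed vertex set and exact edge count. -/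
private lemma exists_tree_subgraph {S : Set V} (hne : S.Nonempty)
    (hrw : ∀ x ∈ S, ∀ y ∈ S, RW G S x y) :
    ∃ H : G.Subgraph, H.Connected ∧ H.verts = S ∧ H.edgeSet.ncard + 1 = S.ncard := by
  obtain ⟨x0, hx0⟩ := hne
  suffices h : ∀ m (H : G.Subgraph), H.Connected → x0 ∈ H.verts → H.verts ⊆ S →
      H.edgeSet.ncard + 1 = H.verts.ncard → S.ncard - H.verts.ncard = m →
      ∃ H' : G.Subgraph, H'.Connected ∧ H'.verts = S ∧ H'.edgeSet.ncard + 1 = S.ncard by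
    refine h (S.ncard - 1) (G.singletonSubgraph x0) Subgraph.singletonSubgraph_connected rfl
      (by simpa using hx0) ?_ ?_
    · simp [singletonSubgraph_verts, edgeSet_singletonSubgraph]
    · simp [singletonSubgraph_verts]
  intro m
  induction m with
  | zero =>
    intro H hc hx0v hsub hcount h0
    have hle : H.verts.ncard ≤ S.ncard := Set.ncard_le_ncard hsub (Set.toFinite S)
    have : H.verts = S := Set.eq_of_subset_of_ncard_le hsub (by omega) (Set.toFinite S)
    exact ⟨H, hc, this, by rw [← this]; exact hcount⟩
  | succ m ih =>
    intro H hc hx0v hsub hcount hm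
    have hle : H.verts.ncard ≤ S.ncard := Set.ncard_le_ncard hsub (Set.toFinite S)
    have hlt : H.verts.ncard < S.ncard := by omega
    have hne' : (S \ H.verts).Nonempty := by
      rw [Set.diff_nonempty]
      intro hSsub
      have := Set.ncard_le_ncard hSsub (Set.toFinite H.verts)
      omega
    obtain ⟨y, hyS, hyH⟩ := hne'
    obtain ⟨p, hp⟩ := hrw x0 (hsub hx0v) y hyS
    obtain ⟨a, b, hab, ha, hb, hbs⟩ := crossing p H.verts hx0v hyH
    have hbS : b ∈ S := hp b hbs
    set K := H ⊔ G.subgraphOfAdj hab with hK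
    have hKverts : K.verts = insert b H.verts := by
      rw [hK, Subgraph.verts_sup, subgraphOfAdj_verts]
      ext z; simp only [Set.mem_union, Set.mem_insert_iff, Set.mem_singleton_iff]
      constructor
      · rintro (h | h | h) <;> simp [*]
      · rintro (h | h) <;> simp [*]
    have hKedges : K.edgeSet = insert s(a, b) H.edgeSet := by
      rw [hK, Subgraph.edgeSet_sup, edgeSet_subgraphOfAdj, Set.union_singleton]
    refine ih K ?_ ?_ ?_ ?_ ?_
    · exact Subgraph.connected_sup hc.preconnected (Subgraph.subgraphOfAdj_connected hab).preconnected
        ⟨a, by rw [Subgraph.verts_inf]; exact ⟨ha, by simp⟩⟩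
    · rw [hKverts]; exact Set.mem_insert_of_mem _ hx0v
    · rw [hKverts]; exact Set.insert_subset hbS hsub
    · have h1 : s(a, b) ∉ H.edgeSet := fun hmem => hb (Subgraph.mem_edgeSet.mp hmem).snd_mem
      rw [hKverts, hKedges, Set.ncard_insert_of_notMem h1 (Set.toFinite _),
        Set.ncard_insert_of_notMem hb (Set.toFinite _)]
      omega
    · rw [hKverts, Set.ncard_insert_of_notMem hb (Set.toFinite _)]; omega

/-- A connected subgraph has at least `|verts| - 1` edges. -/
private lemma verts_ncard_le_edges (H : G.Subgraph) (hc : H.Connected) :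
    H.verts.ncard ≤ H.edgeSet.ncard + 1 := by
  obtain ⟨x0, hx0⟩ := hc.nonempty
  have hcoe : H.coe.Connected := hc.coe
  set x0' : H.verts := ⟨x0, hx0⟩ with hx0'
  have key : ∀ v : H.verts, v ≠ x0' →
      ∃ u : H.verts, H.coe.Adj v u ∧ H.coe.dist u x0' < H.coe.dist v x0' := by
    intro v hv
    obtain ⟨p, hp⟩ := (hcoe.preconnected v x0').exists_walk_length_eq_dist
    cases p with
    | nil => exact absurd rfl hv
    | @cons u c w h q =>
      refine ⟨c, h, ?_⟩
      have h1 := SimpleGraph.dist_le q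
      rw [← hp, Walk.length_cons]
      omega
  choose f hf1 hf2 using key
  set φ : H.verts → Sym2 V := fun v =>
    if h : v = x0' then s(x0, x0) else s((v : V), (f v h : V)) with hφ
  have hmaps : ∀ v : H.verts, v ≠ x0' → φ v ∈ H.edgeSet := by
    intro v hv
    simp only [hφ, dif_neg hv]
    exact Subgraph.mem_edgeSet.mpr ((Subgraph.coe_adj _ _ _).mp (hf1 v hv))
  have hinj : Set.InjOn φ {v : H.verts | v ≠ x0'} := by
    intro a ha b hb hab
    simp only [Set.mem_setOf_eq] at ha hb
    simp only [hφ, dif_neg ha, dif_neg hb, Sym2.eq_iff] at hab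
    rcases hab with ⟨h1, _⟩ | ⟨h1, h2⟩
    · exact Subtype.ext h1
    · have e1 : (a : H.verts) = f b hb := Subtype.ext h1
      have e2 : b = f a ha := Subtype.ext h2.symm
      have k1 := hf2 a ha
      have k2 := hf2 b hb
      rw [← e2] at k1
      rw [← e1] at k2
      omega
  have h1 : ({v : H.verts | v ≠ x0'}).ncard ≤ H.edgeSet.ncard := by
    rw [← Set.ncard_image_of_injOn hinj]
    refine Set.ncard_le_ncard ?_ (Set.toFinite _)
    rintro e ⟨v, hv, rfl⟩
    exact hmaps v hv
  have h2 : ({v : H.verts | v ≠ x0'}).ncard + 1 = H.verts.ncard := by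
    have he : {v : H.verts | v ≠ x0'} = Set.univ \ {x0'} := by ext z; simp
    rw [he, Set.ncard_diff_singleton_add_one (Set.mem_univ _) (Set.toFinite _),
      Set.ncard_univ, ← Nat.card_coe_set_eq]
  omega

/-- Characterization of the Steiner distance via membership and lower bound. -/
private lemma steinerDist_eq {S : Set V} {m : ℕ}
    (hmem : ∃ H : G.Subgraph, H.Connected ∧ S ⊆ H.verts ∧ H.edgeSet.ncard = m)
    (hlb : ∀ H : G.Subgraph, H.Connected → S ⊆ H.verts → m ≤ H.edgeSet.ncard) :
    steinerDist G S = m := by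
  refine le_antisymm (Nat.sInf_le hmem) (le_csInf ⟨m, hmem⟩ ?_)
  rintro k ⟨H, h1, h2, rfl⟩
  exact hlb H h1 h2

private lemma compl_singleton_ncard (v : V) :
    ({v}ᶜ : Set V).ncard + 1 = Fintype.card V := by
  have : ({v}ᶜ : Set V) = Set.univ \ {v} := by ext z; simp
  rw [this, Set.ncard_diff_singleton_add_one (Set.mem_univ _) (Set.toFinite _),
    Set.ncard_univ, Nat.card_eq_fintype_card]

/-- If `v` is a cut vertex, any connected subgraph containing all other vertices
contains `v` as well. -/
private lemma verts_eq_univ_of_cut {v : V} (hcut : IsCutVertex G v) (H : G.Subgraph)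
    (hc : H.Connected) (hsub : ({v}ᶜ : Set V) ⊆ H.verts) : H.verts = Set.univ := by
  by_contra hne
  have hv : v ∉ H.verts := by
    intro hv
    apply hne
    ext z
    simp only [Set.mem_univ, iff_true]
    by_cases hz : z = v
    · exact hz ▸ hv
    · exact hsub hz
  have hverts : H.verts = {u | u ≠ v} := by
    ext z
    constructor
    · intro hz
      exact fun hzv => hv (hzv ▸ hz)
    · intro hz
      exact hsub hz
  exact hcut.2 (hverts ▸ hc.induce_verts)

/-- Steiner distance of the complement of a cut vertex. -/
private lemma steinerDist_cut {v : V} (hG : G.Connected) (hcut : IsCutVertex G v) :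
    steinerDist G ({v}ᶜ : Set V) = Fintype.card V - 1 := by
  have hcard : (Set.univ : Set V).ncard = Fintype.card V := by
    rw [Set.ncard_univ, Nat.card_eq_fintype_card]
  refine steinerDist_eq ?_ ?_
  · have : Nonempty V := hG.nonempty
    obtain ⟨H, h1, h2, h3⟩ := exists_tree_subgraph (G := G) (S := Set.univ)
      Set.univ_nonempty
      (fun x _ y _ => ⟨(hG.preconnected x y).some, fun z _ => Set.mem_univ z⟩)
    exact ⟨H, h1, h2 ▸ Set.subset_univ _, by omega⟩
  · intro H h1 h2
    have := verts_ncard_le_edges H h1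
    rw [verts_eq_univ_of_cut hcut H h1 h2, hcard] at this
    omega

/-- Steiner distance of the complement of a non-cut vertex. -/
private lemma steinerDist_noncut {v : V} (hG : G.Connected) (hnc : ¬ IsCutVertex G v) :
    steinerDist G ({v}ᶜ : Set V) = Fintype.card V - 2 := by
  have hconn : (G.induce {u | u ≠ v}).Connected := by
    by_contra h
    exact hnc ⟨hG, h⟩
  have hset : {u | u ≠ v} = ({v}ᶜ : Set V) := by ext z; simp
  rw [hset] at hconn
  have hne : ({v}ᶜ : Set V).Nonempty := by
    obtain ⟨⟨z, hz⟩⟩ := hconn.nonempty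
    exact ⟨z, hz⟩
  have hcc := compl_singleton_ncard (V := V) v
  refine steinerDist_eq ?_ ?_
  · obtain ⟨H, h1, h2, h3⟩ := exists_tree_subgraph hne
      (fun x hx y hy => rw_of_induce_connected hconn hx hy)
    exact ⟨H, h1, h2 ▸ subset_rfl, by omega⟩
  · intro H h1 h2
    have hv := verts_ncard_le_edges H h1
    have hmono := Set.ncard_le_ncard h2 (Set.toFinite _)
    omega

/-- In a one-vertex graph every vertex is a cut vertex (by the given definition). -/
private lemma cut_of_card_one (hG : G.Connected) (hcard : Fintype.card V = 1) (v : V) :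
    IsCutVertex G v := by
  refine ⟨hG, fun hconn => ?_⟩
  obtain ⟨⟨z, hz⟩⟩ := hconn.nonempty
  obtain ⟨x, hx⟩ := Fintype.card_eq_one_iff.mp hcard
  exact hz ((hx z).trans (hx v).symm)

/-- Every biconnected set with at least two vertices extends to a block. -/
private lemma exists_block_superset {S : Set V} (hS : IsBiconnectedSet G S)
    (h2 : 2 ≤ S.ncard) : ∃ B : Set V, IsBlock G B ∧ S ⊆ B := by
  set F : Set (Set V) := {T | S ⊆ T ∧ 2 ≤ T.ncard ∧ IsBiconnectedSet G T} with hF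
  have hne : F.Nonempty := ⟨S, subset_rfl, h2, hS⟩
  obtain ⟨B, hBF, hBmax⟩ := Set.Finite.exists_maximalFor id F (Set.toFinite F) hne
  refine ⟨B, ⟨hBF.2.1, hBF.2.2, fun B' hBB' h2' hbic' => ?_⟩, hBF.1⟩
  exact le_antisymm (hBmax ⟨hBF.1.trans hBB', h2', hbic'⟩ hBB') hBB'

private lemma two_le_ncard_pair {x y : V} {S : Set V} (hx : x ∈ S) (hy : y ∈ S)
    (hxy : x ≠ y) : 2 ≤ S.ncard :=
  (Set.one_lt_ncard_iff (Set.toFinite S)).mpr ⟨x, y, hx, hy, hxy⟩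

/-- In a block graph, any two neighbors of a non-cut vertex are adjacent. -/
private lemma nbhd_clique (hbg : IsBlockGraph G) {v : V} (hnc : ¬ IsCutVertex G v)
    {u1 u2 : V} (h1 : G.Adj v u1) (h2 : G.Adj v u2) (h12 : u1 ≠ u2) : G.Adj u1 u2 := by
  have hG := hbg.1
  have hconn : (G.induce {u | u ≠ v}).Connected := by
    by_contra h
    exact hnc ⟨hG, h⟩
  obtain ⟨p0, hp0⟩ := rw_of_induce_connected hconn
    (show u1 ∈ {u | u ≠ v} from h1.ne') (show u2 ∈ {u | u ≠ v} from h2.ne')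
  set p := p0.bypass with hpdef
  have hpath : p.IsPath := p0.bypass_isPath
  have hp : ∀ z ∈ p.support, z ≠ v := fun z hz => hp0 z (p0.support_bypass_subset hz)
  set W : Set V := {v} ∪ {z | z ∈ p.support} with hW
  have hvW : v ∈ W := Or.inl rfl
  have hu1W : u1 ∈ W := Or.inr p.start_mem_support
  have hu2W : u2 ∈ W := Or.inr p.end_mem_support
  have hsuppW : {z | z ∈ p.support} ⊆ W := Set.subset_union_right
  -- W is biconnected
  have hbic : IsBiconnectedSet G W := by
    constructor
    · refine conn_of_rw_hub hvW ?_
      rintro x (hx | hx)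
      · have hx' := Set.mem_singleton_iff.mp hx
        subst hx'
        exact rw_refl hvW
      · exact rw_trans (rw_mono hsuppW ⟨p.dropUntil x hx,
          fun z hz => p.support_dropUntil_subset hx hz⟩) (rw_adj h2.symm hu2W hvW)
    · intro w hw hne
      by_cases hwv : w = v
      · subst hwv
        have : W \ {w} = {z | z ∈ p.support} := by
          ext z
          constructor
          · rintro ⟨hz | hz, hzw⟩
            · exact absurd hz hzw
            · exact hz
          · intro hz
            exact ⟨Or.inr hz, hp z hz⟩
        rw [this]
        exact p.connected_induce_support
      · have hvW' : v ∈ W \ {w} := Set.mem_diff_singleton.mpr ⟨hvW, fun h => hwv h.symm⟩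
        refine conn_of_rw_hub hvW' ?_
        rintro x ⟨hx | hx, hxw⟩
        · have hx' := Set.mem_singleton_iff.mp hx
          subst hx'
          exact rw_refl hvW'
        · have hsub2 : {z | z ∈ p.support} \ {w} ⊆ W \ {w} :=
            fun z hz => ⟨hsuppW hz.1, hz.2⟩
          rcases path_split p hpath w x hx (fun h => hxw (Set.mem_singleton_iff.mpr h)) with hr | hr
          · refine rw_trans (rw_mono hsub2 hr) (rw_adj h1.symm ?_ hvW')
            exact hsub2 (rw_end_mem hr)
          · refine rw_trans (rw_mono hsub2 hr) (rw_adj h2.symm ?_ hvW')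
            exact hsub2 (rw_end_mem hr)
  obtain ⟨B, hB, hWB⟩ := exists_block_superset hbic
    (two_le_ncard_pair hvW hu1W h1.ne)
  exact hbg.2 B hB (hWB hu1W) (hWB hu2W) h12

/-- A non-cut vertex of a block graph lies in a unique block. -/
private lemma unique_block (hbg : IsBlockGraph G) {v : V} (hnc : ¬ IsCutVertex G v) :
    ∃! B : Set V, IsBlock G B ∧ v ∈ B := by
  have hG := hbg.1
  have hne : Nonempty V := hG.nonempty
  have hcard : Fintype.card V ≠ 1 := fun h => hnc (cut_of_card_one hG h v)
  have h1lt : 1 < Fintype.card V := by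
    have := Fintype.card_pos (α := V)
    omega
  obtain ⟨w, hwv⟩ := Fintype.exists_ne_of_one_lt_card h1lt v
  obtain ⟨u0, hu0⟩ : ∃ u, G.Adj v u := by
    obtain ⟨p⟩ := hG.preconnected v w
    cases p with
    | nil => exact absurd rfl hwv
    | cons h q => exact ⟨_, h⟩
  set C : Set V := {v} ∪ {u | G.Adj v u} with hC
  have hvC : v ∈ C := Or.inl rfl
  have hu0C : u0 ∈ C := Or.inr hu0
  have hCmem : ∀ x ∈ C, x = v ∨ G.Adj v x := by
    rintro x (hx | hx)
    · exact Or.inl (Set.mem_singleton_iff.mp hx)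
    · exact Or.inr hx
  have hbicC : IsBiconnectedSet G C := by
    constructor
    · refine conn_of_rw_hub hvC ?_
      intro x hx
      rcases hCmem x hx with rfl | hadj
      · exact rw_refl hvC
      · exact rw_adj hadj.symm hx hvC
    · intro w hw hnonempty
      by_cases hwv' : w = v
      · subst hwv'
        obtain ⟨c0, hc0⟩ := hnonempty
        have hc0ne : c0 ≠ w := fun h => hc0.2 (Set.mem_singleton_iff.mpr h)
        have hc0' : G.Adj w c0 := by
          rcases hCmem c0 hc0.1 with rfl | h
          · exact absurd rfl hc0ne
          · exact h
        refine conn_of_rw_hub hc0 ?_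
        intro x hx
        have hxne : x ≠ w := fun h => hx.2 (Set.mem_singleton_iff.mpr h)
        have hx' : G.Adj w x := by
          rcases hCmem x hx.1 with rfl | h
          · exact absurd rfl hxne
          · exact h
        by_cases hxc : x = c0
        · subst hxc
          exact rw_refl hx
        · exact rw_adj (nbhd_clique hbg hnc hx' hc0' hxc) hx hc0
      · have hvC' : v ∈ C \ {w} := Set.mem_diff_singleton.mpr ⟨hvC, fun h => hwv' h.symm⟩
        refine conn_of_rw_hub hvC' ?_
        intro x hx
        rcases hCmem x hx.1 with rfl | hadj
        · exact rw_refl hvC'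
        · exact rw_adj hadj.symm hx hvC'
  obtain ⟨B0, hB0, hCB0⟩ := exists_block_superset hbicC (two_le_ncard_pair hvC hu0C hu0.ne)
  refine ⟨B0, ⟨hB0, hCB0 hvC⟩, ?_⟩
  rintro B ⟨hB, hvB⟩
  have hclq := hbg.2 B hB
  have hBC : B ⊆ C := by
    intro x hx
    by_cases hxv : x = v
    · exact hxv ▸ hvC
    · exact Or.inr (hclq hx hvB hxv).symm
  exact (hB.2.2 B0 (hBC.trans hCB0) hB0.1 hB0.2.1).symm

end AuxFin

/-- For a connected block graph of order n with p pendant vertices (vertices lying in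
exactly one block and not cut vertices): SW_{n-1}(G) = n^2 - n - p, stated additively. -/
theorem stmt14 {V : Type*} [Fintype V] (G : SimpleGraph V) (hbg : IsBlockGraph G) :
    steinerWiener G (Fintype.card V - 1) +
        {v : V | (∃! B : Set V, IsBlock G B ∧ v ∈ B) ∧ ¬ IsCutVertex G v}.ncard
      = Fintype.card V ^ 2 - Fintype.card V := by
  classical
  have hG := hbg.1
  have hne : Nonempty V := hG.nonempty
  have hpos : 0 < Fintype.card V := Fintype.card_pos
  -- the pendant set is exactly the set of non-cut vertices
  have hset : {v : V | (∃! B : Set V, IsBlock G B ∧ v ∈ B) ∧ ¬ IsCutVertex G v}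
      = {v : V | ¬ IsCutVertex G v} := by
    ext v
    simp only [Set.mem_setOf_eq]
    exact ⟨fun h => h.2, fun h => ⟨unique_block hbg h, h⟩⟩
  -- reindex the sum over (n-1)-subsets by the missing vertex
  have himg : Finset.powersetCard (Fintype.card V - 1) (Finset.univ : Finset V)
      = Finset.image (fun v => Finset.univ.erase v) Finset.univ := by
    ext S
    simp only [Finset.mem_powersetCard, Finset.mem_image, Finset.mem_univ, true_and]
    constructor
    · rintro ⟨hsub, hcard⟩
      have hle : S.card ≤ Fintype.card V := by
        rw [← Finset.card_univ]; exact Finset.card_le_card hsub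
      have h1 : (Finset.univ \ S).card = 1 := by
        rw [Finset.card_sdiff_of_subset hsub, Finset.card_univ]
        omega
      obtain ⟨v, hv⟩ := Finset.card_eq_one.mp h1
      refine ⟨v, ?_⟩
      rw [Finset.erase_eq, ← hv, Finset.sdiff_sdiff_self_left, Finset.univ_inter]
    · rintro ⟨v, rfl⟩
      exact ⟨Finset.subset_univ _,
        by rw [Finset.card_erase_of_mem (Finset.mem_univ v), Finset.card_univ]⟩
  have hinj : ∀ x ∈ (Finset.univ : Finset V), ∀ y ∈ Finset.univ,
      Finset.univ.erase x = Finset.univ.erase y → x = y := by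
    intro x _ y _ h
    by_contra hxy
    have hx : x ∈ Finset.univ.erase y := Finset.mem_erase.mpr ⟨hxy, Finset.mem_univ x⟩
    rw [← h] at hx
    exact (Finset.notMem_erase x _) hx
  have hcoe : ∀ v : V, (↑(Finset.univ.erase v) : Set V) = ({v}ᶜ : Set V) := by
    intro v; ext z; simp
  have hterm : ∀ v : V, steinerDist G ({v}ᶜ : Set V)
      + (if ¬ IsCutVertex G v then 1 else 0) = Fintype.card V - 1 := by
    intro v
    by_cases hv : IsCutVertex G v
    · rw [if_neg (not_not_intro hv), steinerDist_cut hG hv]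
      omega
    · have h2 : 2 ≤ Fintype.card V := by
        rcases Nat.lt_or_ge (Fintype.card V) 2 with h | h
        · have h1 : Fintype.card V = 1 := by omega
          exact absurd (cut_of_card_one hG h1 v) hv
        · exact h
      rw [if_pos hv, steinerDist_noncut hG hv]
      omega
  have hpcard : {v : V | ¬ IsCutVertex G v}.ncard
      = ∑ v : V, (if ¬ IsCutVertex G v then 1 else 0) := by
    rw [Set.ncard_eq_toFinset_card', Set.toFinset_setOf, Finset.card_filter]
  have hsw : steinerWiener G (Fintype.card V - 1)
      = ∑ v : V, steinerDist G ({v}ᶜ : Set V) := by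
    rw [steinerWiener, himg, Finset.sum_image hinj]
    exact Finset.sum_congr rfl fun v _ => by rw [hcoe]
  rw [hset, hsw, hpcard, ← Finset.sum_add_distrib]
  rw [Finset.sum_congr rfl fun v _ => hterm v]
  rw [Finset.sum_const, Finset.card_univ, smul_eq_mul]
  obtain ⟨k, hk⟩ : ∃ k, Fintype.card V = k + 1 := ⟨Fintype.card V - 1, by omega⟩
  rw [hk, Nat.add_sub_cancel]
  have : (k + 1) ^ 2 = (k + 1) * k + (k + 1) := by ring
  omega
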